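/- Let X, Y, Z, W be subsets of Fin m with |X|, |Y|, |Z|, |W| pairwise distinct and all < m, and let A = Δ_X^c, B = Δ_Y^c, C = Δ_Z^c, E = Δ_W^c. Let s₁ < s₂ < s₃ < s₄ be the values |X|, |Y|, |Z|, |W| arranged in increasing order. Then: w(t) = 0 if and only if t = (0,0,0,0); every message t ≠ (0,0,0,0) satisfies 2·w(t) ≥ (2^m − 2^{s₁})(2^m − 2^{s₂})(2^m − 2^{s₃} − 2^{s₄})·2^m; and there exists a message t with 2·w(t) = (2^m − 2^{s₁})(2^m − 2^{s₂})(2^m − 2^{s₃} − 2^{s₄})·2^m. (Hence C_D^{(2)} has length (2^m−2^{|X|})(2^m−2^{|Y|})(2^m−2^{|Z|})(2^m−2^{|W|}), dimension 4m and minimum distance (2^m−2^{s₁})(2^m−2^{s₂})(2^m−2^{s₃}−2^{s₄})2^{m−1}.) -/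

import Mathlib

open Finset

/-- Euclidean dot product of vectors over `𝔽₂`. -/
def dotp {m : ℕ} (x y : Fin m → ZMod 2) : ZMod 2 := ∑ i, x i * y i

/-- Support of a vector over `𝔽₂`. -/
def supp {m : ℕ} (v : Fin m → ZMod 2) : Finset (Fin m) :=
  Finset.univ.filter fun i => v i ≠ 0

/-- The simplicial complex `Δ_S` generated by `S ⊆ [m]`. -/
def delta {m : ℕ} (S : Finset (Fin m)) : Finset (Fin m → ZMod 2) :=
  Finset.univ.filter fun u => supp u ⊆ S

/-- The complement `Δ_S^c` of the simplicial complex generated by `S`. -/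
def deltac {m : ℕ} (S : Finset (Fin m)) : Finset (Fin m → ZMod 2) :=
  Finset.univ \ delta S

/-- A message `(x₁, x₂, x₃, x₄)` consisting of four vectors over `𝔽₂`. -/
abbrev Msg (m : ℕ) :=
  (Fin m → ZMod 2) × (Fin m → ZMod 2) × (Fin m → ZMod 2) × (Fin m → ZMod 2)

/-- The value of the codeword of the subfield code `C_D^{(2)}` associated to the
message `t = (x₁,x₂,x₃,x₄)` at the position `p = (a,b,c,e)`:
`(x₁+x₄)·a + x₃·b + x₂·c + x₁·e`. -/
def cword {m : ℕ} (t p : Msg m) : ZMod 2 :=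
  dotp (t.1 + t.2.2.2) p.1 + dotp t.2.2.1 p.2.1 + dotp t.2.1 p.2.2.1 +
    dotp t.1 p.2.2.2

/-- Hamming weight of the codeword associated to the message `t`, for the code
with defining positions `A × B × C × E`. -/
def cw {m : ℕ} (A B C E : Finset (Fin m → ZMod 2)) (t : Msg m) : ℕ :=
  ((A ×ˢ B ×ˢ C ×ˢ E).filter fun p => cword t p = 1).card

namespace S9
def eps (x : ZMod 2) : ℤ := 1 - 2 * x.val

lemma eps_zero : eps 0 = 1 := by decide
lemma eps_add (x y : ZMod 2) : eps (x + y) = eps x * eps y := by revert x y; decide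

lemma eps_sum {α : Type*} (s : Finset α) (f : α → ZMod 2) :
    eps (∑ i ∈ s, f i) = ∏ i ∈ s, eps (f i) := by
  classical
  induction s using Finset.cons_induction with
  | empty => simp [eps_zero]
  | cons a s ha ih => rw [Finset.sum_cons, Finset.prod_cons, eps_add, ih]

lemma count_filter {α : Type*} [DecidableEq α] (P : Finset α) (g : α → ZMod 2) :
    2 * ((P.filter fun p => g p = 1).card : ℤ) = P.card - ∑ p ∈ P, eps (g p) := by
  have h : ∀ x : ZMod 2, eps x = 1 - 2 * (if x = 1 then (1:ℤ) else 0) := by decide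
  simp only [h]
  rw [Finset.sum_sub_distrib, Finset.sum_const, ← Finset.mul_sum, Finset.sum_boole]
  push_cast
  ring

variable {m : ℕ}

lemma eps_dotp (u a : Fin m → ZMod 2) : eps (dotp u a) = ∏ i, eps (u i * a i) := by
  rw [dotp, eps_sum]

lemma sum_eps_pair (c : ZMod 2) : ∑ x : ZMod 2, eps (c * x) = if c = 0 then 2 else 0 := by
  revert c; decide

lemma sum_eps_univ (u : Fin m → ZMod 2) :
    ∑ a : Fin m → ZMod 2, eps (dotp u a) = if u = 0 then 2 ^ m else 0 := by
  simp only [eps_dotp]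
  rw [← Fintype.piFinset_univ,
    ← Finset.prod_univ_sum (t := fun _ : Fin m => (Finset.univ : Finset (ZMod 2)))
      (f := fun i x => eps (u i * x))]
  simp only [sum_eps_pair]
  by_cases hu : u = 0
  · simp [hu, Finset.prod_const]
  · have : ∃ i, u i ≠ 0 := by
      by_contra h
      push_neg at h
      exact hu (funext h)
    obtain ⟨i, hi⟩ := this
    rw [if_neg hu, Finset.prod_eq_zero (Finset.mem_univ i) (by simp [hi])]

lemma delta_eq_piFinset (S : Finset (Fin m)) :
    delta S = Fintype.piFinset (fun i => if i ∈ S then Finset.univ else {0}) := by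
  ext a
  simp only [delta, supp, Fintype.mem_piFinset, Finset.mem_filter, Finset.mem_univ, true_and,
    Finset.subset_iff, Finset.mem_filter, Finset.mem_univ, true_and]
  constructor
  · intro h i
    by_cases hi : i ∈ S
    · simp [hi]
    · simp only [hi, if_false, Finset.mem_singleton]
      by_contra hne
      exact hi (h hne)
  · intro h i hi
    by_contra hiS
    have := h i
    simp [hiS, Finset.mem_singleton] at this
    exact hi this

lemma sum_eps_delta (S : Finset (Fin m)) (u : Fin m → ZMod 2) :
    ∑ a ∈ delta S, eps (dotp u a) =
      if ∀ i ∈ S, u i = 0 then 2 ^ S.card else 0 := by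
  simp only [eps_dotp]
  rw [delta_eq_piFinset,
    ← Finset.prod_univ_sum (t := fun i => if i ∈ S then (Finset.univ : Finset (ZMod 2)) else {0})
      (f := fun i x => eps (u i * x))]
  have step : ∀ i : Fin m,
      (∑ x ∈ (if i ∈ S then (Finset.univ : Finset (ZMod 2)) else {0}), eps (u i * x)) =
      if i ∈ S then (if u i = 0 then 2 else 0) else 1 := by
    intro i
    by_cases hi : i ∈ S
    · simp [hi, sum_eps_pair]
    · simp [hi, eps_zero]
  simp only [step]
  rw [Finset.prod_ite_mem, Finset.univ_inter]
  by_cases h : ∀ i ∈ S, u i = 0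
  · rw [if_pos h, Finset.prod_congr rfl (fun i hi => by rw [if_pos (h i hi)]),
      Finset.prod_const]
  · push_neg at h
    obtain ⟨i, hi, hui⟩ := h
    rw [if_neg (by push_neg; exact ⟨i, hi, hui⟩), Finset.prod_eq_zero hi (by simp [hui])]

lemma sum_eps_deltac (S : Finset (Fin m)) (u : Fin m → ZMod 2) :
    ∑ a ∈ deltac S, eps (dotp u a) =
      (if u = 0 then 2 ^ m else 0) - (if ∀ i ∈ S, u i = 0 then 2 ^ S.card else 0) := by
  rw [deltac, Finset.sum_sdiff_eq_sub (Finset.subset_univ _), sum_eps_delta, ← sum_eps_univ]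

lemma dotp_zero (a : Fin m → ZMod 2) : dotp 0 a = 0 := by simp [dotp]

lemma card_deltac (S : Finset (Fin m)) :
    ((deltac S).card : ℤ) = 2 ^ m - 2 ^ S.card := by
  have h := sum_eps_deltac S 0
  simp only [dotp_zero, eps_zero, Finset.sum_const, nsmul_eq_mul, mul_one] at h
  rw [if_pos trivial, if_pos (by intro i _; rfl)] at h
  exact h

lemma cw_formula (A B C E : Finset (Fin m → ZMod 2)) (t : Msg m) :
    2 * (cw A B C E t : ℤ) =
      (A.card : ℤ) * B.card * C.card * E.card -
      (∑ a ∈ A, eps (dotp (t.1 + t.2.2.2) a)) * (∑ b ∈ B, eps (dotp t.2.2.1 b)) *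
        (∑ c ∈ C, eps (dotp t.2.1 c)) * (∑ e ∈ E, eps (dotp t.1 e)) := by
  rw [cw, count_filter]
  have hcard : (((A ×ˢ B ×ˢ C ×ˢ E).card : ℤ)) = (A.card : ℤ) * B.card * C.card * E.card := by
    simp [Finset.card_product]; ring
  rw [hcard]
  congr 1
  simp only [Finset.sum_product, cword, eps_add, mul_assoc, ← Finset.mul_sum,
    ← Finset.sum_mul]


set_option maxHeartbeats 1000000 in
lemma keyA (m s₁ s₂ s₃ s₄ c₁ c₂ c₃ c₄ : ℕ)
    (h12 : s₁ < s₂) (h23 : s₂ < s₃) (h34 : s₃ < s₄) (h4m : s₄ < m)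
    (hc1 : c₁ = s₁ ∨ c₁ = s₂ ∨ c₁ = s₃ ∨ c₁ = s₄)
    (hc2 : c₂ = s₁ ∨ c₂ = s₂ ∨ c₂ = s₃ ∨ c₂ = s₄)
    (hc3 : c₃ = s₁ ∨ c₃ = s₂ ∨ c₃ = s₃ ∨ c₃ = s₄)
    (hc4 : c₄ = s₁ ∨ c₄ = s₂ ∨ c₄ = s₃ ∨ c₄ = s₄)
    (d12 : c₁ ≠ c₂) (d13 : c₁ ≠ c₃) (d14 : c₁ ≠ c₄)
    (d23 : c₂ ≠ c₃) (d24 : c₂ ≠ c₄) (d34 : c₃ ≠ c₄)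
    (hsum : c₁ + c₂ + c₃ + c₄ = s₁ + s₂ + s₃ + s₄)
    (a b c d : ℤ)
    (ha : a = 2 ^ m - 2 ^ c₁ ∨ a = -2 ^ c₁ ∨ a = 0)
    (hb : b = 2 ^ m - 2 ^ c₂ ∨ b = -2 ^ c₂ ∨ b = 0)
    (hc : c = 2 ^ m - 2 ^ c₃ ∨ c = -2 ^ c₃ ∨ c = 0)
    (hd : d = 2 ^ m - 2 ^ c₄ ∨ d = -2 ^ c₄ ∨ d = 0)
    (hne : a ≠ 2 ^ m - 2 ^ c₁ ∨ b ≠ 2 ^ m - 2 ^ c₂ ∨ c ≠ 2 ^ m - 2 ^ c₃ ∨ d ≠ 2 ^ m - 2 ^ c₄) :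
    a * b * c * d ≤ 2 ^ s₃ * 2 ^ s₄ * (2 ^ m - 2 ^ s₁) * (2 ^ m - 2 ^ s₂) := by
  have hm1 : c₁ < m := by clear hc2 hc3 hc4 d12 d13 d14 d23 d24 d34 ha hb hc hd hne; omega
  have hm2 : c₂ < m := by clear hc1 hc3 hc4 d12 d13 d14 d23 d24 d34 ha hb hc hd hne; omega
  have hm3 : c₃ < m := by clear hc1 hc2 hc4 d12 d13 d14 d23 d24 d34 ha hb hc hd hne; omega
  have hm4 : c₄ < m := by clear hc1 hc2 hc3 d12 d13 d14 d23 d24 d34 ha hb hc hd hne; omega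
  have hs12 : c₁ + c₂ ≤ s₃ + s₄ := by clear hc3 hc4 d13 d14 d23 d24 d34 ha hb hc hd hne; omega
  have hor12 : (s₁ ≤ c₁ ∧ s₂ ≤ c₂) ∨ (s₁ ≤ c₂ ∧ s₂ ≤ c₁) := by clear hc3 hc4 d13 d14 d23 d24 d34 ha hb hc hd hne; omega
  have hs13 : c₁ + c₃ ≤ s₃ + s₄ := by clear hc2 hc4 d12 d14 d23 d24 d34 ha hb hc hd hne; omega
  have hor13 : (s₁ ≤ c₁ ∧ s₂ ≤ c₃) ∨ (s₁ ≤ c₃ ∧ s₂ ≤ c₁) := by clear hc2 hc4 d12 d14 d23 d24 d34 ha hb hc hd hne; omega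
  have hs14 : c₁ + c₄ ≤ s₃ + s₄ := by clear hc2 hc3 d12 d13 d23 d24 d34 ha hb hc hd hne; omega
  have hor14 : (s₁ ≤ c₁ ∧ s₂ ≤ c₄) ∨ (s₁ ≤ c₄ ∧ s₂ ≤ c₁) := by clear hc2 hc3 d12 d13 d23 d24 d34 ha hb hc hd hne; omega
  have hs23 : c₂ + c₃ ≤ s₃ + s₄ := by clear hc1 hc4 d12 d13 d14 d24 d34 ha hb hc hd hne; omega
  have hor23 : (s₁ ≤ c₂ ∧ s₂ ≤ c₃) ∨ (s₁ ≤ c₃ ∧ s₂ ≤ c₂) := by clear hc1 hc4 d12 d13 d14 d24 d34 ha hb hc hd hne; omega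
  have hs24 : c₂ + c₄ ≤ s₃ + s₄ := by clear hc1 hc3 d12 d13 d14 d23 d34 ha hb hc hd hne; omega
  have hor24 : (s₁ ≤ c₂ ∧ s₂ ≤ c₄) ∨ (s₁ ≤ c₄ ∧ s₂ ≤ c₂) := by clear hc1 hc3 d12 d13 d14 d23 d34 ha hb hc hd hne; omega
  have hs34 : c₃ + c₄ ≤ s₃ + s₄ := by clear hc1 hc2 d12 d13 d14 d23 d24 ha hb hc hd hne; omega
  have hor34 : (s₁ ≤ c₃ ∧ s₂ ≤ c₄) ∨ (s₁ ≤ c₄ ∧ s₂ ≤ c₃) := by clear hc1 hc2 d12 d13 d14 d23 d24 ha hb hc hd hne; omega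
  clear hc1 hc2 hc3 hc4 d12 d13 d14 d23 d24 d34
  have tple : ∀ x y : ℕ, x ≤ y → (2:ℤ) ^ x ≤ 2 ^ y := fun x y h => pow_le_pow_right₀ one_le_two h
  have tplt : ∀ x y : ℕ, x < y → (2:ℤ) ^ x < 2 ^ y := fun x y h => pow_lt_pow_right₀ one_lt_two h
  have hAs1 : (0:ℤ) < 2 ^ m - 2 ^ s₁ := by have := tplt s₁ m (by omega); linarith
  have hAs2 : (0:ℤ) < 2 ^ m - 2 ^ s₂ := by have := tplt s₂ m (by omega); linarith
  have hQ0 : (0:ℤ) ≤ 2 ^ s₃ * 2 ^ s₄ * (2 ^ m - 2 ^ s₁) * (2 ^ m - 2 ^ s₂) := by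
    apply mul_nonneg _ hAs2.le
    apply mul_nonneg _ hAs1.le
    positivity
  have hA1 : (0:ℤ) < 2 ^ m - 2 ^ c₁ := by have := tplt c₁ m hm1; linarith
  have hA2 : (0:ℤ) < 2 ^ m - 2 ^ c₂ := by have := tplt c₂ m hm2; linarith
  have hA3 : (0:ℤ) < 2 ^ m - 2 ^ c₃ := by have := tplt c₃ m hm3; linarith
  have hA4 : (0:ℤ) < 2 ^ m - 2 ^ c₄ := by have := tplt c₄ m hm4; linarith
  have hP12 : (2:ℤ) ^ c₁ * 2 ^ c₂ ≤ 2 ^ s₃ * 2 ^ s₄ := by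
    calc (2:ℤ) ^ c₁ * 2 ^ c₂ = 2 ^ (c₁ + c₂) := (pow_add 2 _ _).symm
      _ ≤ 2 ^ (s₃ + s₄) := tple _ _ hs12
      _ = 2 ^ s₃ * 2 ^ s₄ := pow_add 2 _ _
  have hB12 : ((2:ℤ) ^ m - 2 ^ c₁) * (2 ^ m - 2 ^ c₂) ≤ (2 ^ m - 2 ^ s₁) * (2 ^ m - 2 ^ s₂) := by
    rcases hor12 with ⟨e1, e2⟩ | ⟨e1, e2⟩
    · exact mul_le_mul (by have := tple _ _ e1; linarith) (by have := tple _ _ e2; linarith) hA2.le hAs1.le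
    · rw [mul_comm]
      exact mul_le_mul (by have := tple _ _ e1; linarith) (by have := tple _ _ e2; linarith) hA1.le hAs1.le
  have hP13 : (2:ℤ) ^ c₁ * 2 ^ c₃ ≤ 2 ^ s₃ * 2 ^ s₄ := by
    calc (2:ℤ) ^ c₁ * 2 ^ c₃ = 2 ^ (c₁ + c₃) := (pow_add 2 _ _).symm
      _ ≤ 2 ^ (s₃ + s₄) := tple _ _ hs13
      _ = 2 ^ s₃ * 2 ^ s₄ := pow_add 2 _ _
  have hB13 : ((2:ℤ) ^ m - 2 ^ c₁) * (2 ^ m - 2 ^ c₃) ≤ (2 ^ m - 2 ^ s₁) * (2 ^ m - 2 ^ s₂) := by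
    rcases hor13 with ⟨e1, e2⟩ | ⟨e1, e2⟩
    · exact mul_le_mul (by have := tple _ _ e1; linarith) (by have := tple _ _ e2; linarith) hA3.le hAs1.le
    · rw [mul_comm]
      exact mul_le_mul (by have := tple _ _ e1; linarith) (by have := tple _ _ e2; linarith) hA1.le hAs1.le
  have hP14 : (2:ℤ) ^ c₁ * 2 ^ c₄ ≤ 2 ^ s₃ * 2 ^ s₄ := by
    calc (2:ℤ) ^ c₁ * 2 ^ c₄ = 2 ^ (c₁ + c₄) := (pow_add 2 _ _).symm
      _ ≤ 2 ^ (s₃ + s₄) := tple _ _ hs14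
      _ = 2 ^ s₃ * 2 ^ s₄ := pow_add 2 _ _
  have hB14 : ((2:ℤ) ^ m - 2 ^ c₁) * (2 ^ m - 2 ^ c₄) ≤ (2 ^ m - 2 ^ s₁) * (2 ^ m - 2 ^ s₂) := by
    rcases hor14 with ⟨e1, e2⟩ | ⟨e1, e2⟩
    · exact mul_le_mul (by have := tple _ _ e1; linarith) (by have := tple _ _ e2; linarith) hA4.le hAs1.le
    · rw [mul_comm]
      exact mul_le_mul (by have := tple _ _ e1; linarith) (by have := tple _ _ e2; linarith) hA1.le hAs1.le
  have hP23 : (2:ℤ) ^ c₂ * 2 ^ c₃ ≤ 2 ^ s₃ * 2 ^ s₄ := by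
    calc (2:ℤ) ^ c₂ * 2 ^ c₃ = 2 ^ (c₂ + c₃) := (pow_add 2 _ _).symm
      _ ≤ 2 ^ (s₃ + s₄) := tple _ _ hs23
      _ = 2 ^ s₃ * 2 ^ s₄ := pow_add 2 _ _
  have hB23 : ((2:ℤ) ^ m - 2 ^ c₂) * (2 ^ m - 2 ^ c₃) ≤ (2 ^ m - 2 ^ s₁) * (2 ^ m - 2 ^ s₂) := by
    rcases hor23 with ⟨e1, e2⟩ | ⟨e1, e2⟩
    · exact mul_le_mul (by have := tple _ _ e1; linarith) (by have := tple _ _ e2; linarith) hA3.le hAs1.le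
    · rw [mul_comm]
      exact mul_le_mul (by have := tple _ _ e1; linarith) (by have := tple _ _ e2; linarith) hA2.le hAs1.le
  have hP24 : (2:ℤ) ^ c₂ * 2 ^ c₄ ≤ 2 ^ s₃ * 2 ^ s₄ := by
    calc (2:ℤ) ^ c₂ * 2 ^ c₄ = 2 ^ (c₂ + c₄) := (pow_add 2 _ _).symm
      _ ≤ 2 ^ (s₃ + s₄) := tple _ _ hs24
      _ = 2 ^ s₃ * 2 ^ s₄ := pow_add 2 _ _
  have hB24 : ((2:ℤ) ^ m - 2 ^ c₂) * (2 ^ m - 2 ^ c₄) ≤ (2 ^ m - 2 ^ s₁) * (2 ^ m - 2 ^ s₂) := by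
    rcases hor24 with ⟨e1, e2⟩ | ⟨e1, e2⟩
    · exact mul_le_mul (by have := tple _ _ e1; linarith) (by have := tple _ _ e2; linarith) hA4.le hAs1.le
    · rw [mul_comm]
      exact mul_le_mul (by have := tple _ _ e1; linarith) (by have := tple _ _ e2; linarith) hA2.le hAs1.le
  have hP34 : (2:ℤ) ^ c₃ * 2 ^ c₄ ≤ 2 ^ s₃ * 2 ^ s₄ := by
    calc (2:ℤ) ^ c₃ * 2 ^ c₄ = 2 ^ (c₃ + c₄) := (pow_add 2 _ _).symm
      _ ≤ 2 ^ (s₃ + s₄) := tple _ _ hs34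
      _ = 2 ^ s₃ * 2 ^ s₄ := pow_add 2 _ _
  have hB34 : ((2:ℤ) ^ m - 2 ^ c₃) * (2 ^ m - 2 ^ c₄) ≤ (2 ^ m - 2 ^ s₁) * (2 ^ m - 2 ^ s₂) := by
    rcases hor34 with ⟨e1, e2⟩ | ⟨e1, e2⟩
    · exact mul_le_mul (by have := tple _ _ e1; linarith) (by have := tple _ _ e2; linarith) hA4.le hAs1.le
    · rw [mul_comm]
      exact mul_le_mul (by have := tple _ _ e1; linarith) (by have := tple _ _ e2; linarith) hA3.le hAs1.le
  have hall : (2:ℤ) ^ c₁ * 2 ^ c₂ * 2 ^ c₃ * 2 ^ c₄ ≤ 2 ^ s₃ * 2 ^ s₄ * (2 ^ m - 2 ^ s₁) * (2 ^ m - 2 ^ s₂) := by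
    have e1 : (2:ℤ) ^ s₁ ≤ 2 ^ m - 2 ^ s₁ := by
      have h := tple (s₁ + 1) m (by omega)
      rw [pow_succ] at h; linarith
    have e2 : (2:ℤ) ^ s₂ ≤ 2 ^ m - 2 ^ s₂ := by
      have h := tple (s₂ + 1) m (by omega)
      rw [pow_succ] at h; linarith
    calc (2:ℤ) ^ c₁ * 2 ^ c₂ * 2 ^ c₃ * 2 ^ c₄ = 2 ^ (c₁ + c₂ + c₃ + c₄) := by
          rw [pow_add, pow_add, pow_add]
      _ = 2 ^ (s₁ + s₂ + s₃ + s₄) := by rw [hsum]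
      _ = (2 ^ s₃ * 2 ^ s₄) * (2 ^ s₁ * 2 ^ s₂) := by rw [pow_add, pow_add, pow_add]; ring
      _ ≤ (2 ^ s₃ * 2 ^ s₄) * ((2 ^ m - 2 ^ s₁) * (2 ^ m - 2 ^ s₂)) := by
          refine mul_le_mul_of_nonneg_left ?_ (by positivity)
          exact mul_le_mul e1 e2 (by positivity) hAs1.le
      _ = 2 ^ s₃ * 2 ^ s₄ * (2 ^ m - 2 ^ s₁) * (2 ^ m - 2 ^ s₂) := by ring
  rcases ha with rfl | rfl | rfl
  · rcases hb with rfl | rfl | rfl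
    · rcases hc with rfl | rfl | rfl
      · rcases hd with rfl | rfl | rfl
        · rcases hne with h | h | h | h <;> exact absurd rfl h
        · have hnn : (0:ℤ) ≤ (2 ^ m - 2 ^ c₁) * (2 ^ m - 2 ^ c₂) * (2 ^ m - 2 ^ c₃) * 2 ^ c₄ :=
            mul_nonneg (mul_nonneg (mul_nonneg hA1.le hA2.le) hA3.le) (by positivity : (0:ℤ) ≤ 2 ^ c₄)
          linarith [hQ0, hnn]
        · simp only [mul_zero, zero_mul]
          exact hQ0
      · rcases hd with rfl | rfl | rfl
        · have hnn : (0:ℤ) ≤ (2 ^ m - 2 ^ c₁) * (2 ^ m - 2 ^ c₂) * 2 ^ c₃ * (2 ^ m - 2 ^ c₄) :=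
            mul_nonneg (mul_nonneg (mul_nonneg hA1.le hA2.le) (by positivity : (0:ℤ) ≤ 2 ^ c₃)) hA4.le
          linarith [hQ0, hnn]
        · calc (2 ^ m - 2 ^ c₁) * (2 ^ m - 2 ^ c₂) * (-2 ^ c₃) * (-2 ^ c₄) = (2 ^ c₃ * 2 ^ c₄) * ((2 ^ m - 2 ^ c₁) * (2 ^ m - 2 ^ c₂)) := by ring
            _ ≤ (2 ^ s₃ * 2 ^ s₄) * ((2 ^ m - 2 ^ s₁) * (2 ^ m - 2 ^ s₂)) :=
              mul_le_mul hP34 hB12 (mul_nonneg hA1.le hA2.le) (by positivity)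
            _ = 2 ^ s₃ * 2 ^ s₄ * (2 ^ m - 2 ^ s₁) * (2 ^ m - 2 ^ s₂) := by ring
        · simp only [mul_zero, zero_mul]
          exact hQ0
      · rcases hd with rfl | rfl | rfl
        · simp only [mul_zero, zero_mul]
          exact hQ0
        · simp only [mul_zero, zero_mul]
          exact hQ0
        · simp only [mul_zero, zero_mul]
          exact hQ0
    · rcases hc with rfl | rfl | rfl
      · rcases hd with rfl | rfl | rfl
        · have hnn : (0:ℤ) ≤ (2 ^ m - 2 ^ c₁) * 2 ^ c₂ * (2 ^ m - 2 ^ c₃) * (2 ^ m - 2 ^ c₄) :=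
            mul_nonneg (mul_nonneg (mul_nonneg hA1.le (by positivity : (0:ℤ) ≤ 2 ^ c₂)) hA3.le) hA4.le
          linarith [hQ0, hnn]
        · calc (2 ^ m - 2 ^ c₁) * (-2 ^ c₂) * (2 ^ m - 2 ^ c₃) * (-2 ^ c₄) = (2 ^ c₂ * 2 ^ c₄) * ((2 ^ m - 2 ^ c₁) * (2 ^ m - 2 ^ c₃)) := by ring
            _ ≤ (2 ^ s₃ * 2 ^ s₄) * ((2 ^ m - 2 ^ s₁) * (2 ^ m - 2 ^ s₂)) :=
              mul_le_mul hP24 hB13 (mul_nonneg hA1.le hA3.le) (by positivity)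
            _ = 2 ^ s₃ * 2 ^ s₄ * (2 ^ m - 2 ^ s₁) * (2 ^ m - 2 ^ s₂) := by ring
        · simp only [mul_zero, zero_mul]
          exact hQ0
      · rcases hd with rfl | rfl | rfl
        · calc (2 ^ m - 2 ^ c₁) * (-2 ^ c₂) * (-2 ^ c₃) * (2 ^ m - 2 ^ c₄) = (2 ^ c₂ * 2 ^ c₃) * ((2 ^ m - 2 ^ c₁) * (2 ^ m - 2 ^ c₄)) := by ring
            _ ≤ (2 ^ s₃ * 2 ^ s₄) * ((2 ^ m - 2 ^ s₁) * (2 ^ m - 2 ^ s₂)) :=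
              mul_le_mul hP23 hB14 (mul_nonneg hA1.le hA4.le) (by positivity)
            _ = 2 ^ s₃ * 2 ^ s₄ * (2 ^ m - 2 ^ s₁) * (2 ^ m - 2 ^ s₂) := by ring
        · have hnn : (0:ℤ) ≤ (2 ^ m - 2 ^ c₁) * 2 ^ c₂ * 2 ^ c₃ * 2 ^ c₄ :=
            mul_nonneg (mul_nonneg (mul_nonneg hA1.le (by positivity : (0:ℤ) ≤ 2 ^ c₂)) (by positivity : (0:ℤ) ≤ 2 ^ c₃)) (by positivity : (0:ℤ) ≤ 2 ^ c₄)
          linarith [hQ0, hnn]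
        · simp only [mul_zero, zero_mul]
          exact hQ0
      · rcases hd with rfl | rfl | rfl
        · simp only [mul_zero, zero_mul]
          exact hQ0
        · simp only [mul_zero, zero_mul]
          exact hQ0
        · simp only [mul_zero, zero_mul]
          exact hQ0
    · rcases hc with rfl | rfl | rfl
      · rcases hd with rfl | rfl | rfl
        · simp only [mul_zero, zero_mul]
          exact hQ0
        · simp only [mul_zero, zero_mul]
          exact hQ0
        · simp only [mul_zero, zero_mul]
          exact hQ0
      · rcases hd with rfl | rfl | rfl
        · simp only [mul_zero, zero_mul]
          exact hQ0
        · simp only [mul_zero, zero_mul]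
          exact hQ0
        · simp only [mul_zero, zero_mul]
          exact hQ0
      · rcases hd with rfl | rfl | rfl
        · simp only [mul_zero, zero_mul]
          exact hQ0
        · simp only [mul_zero, zero_mul]
          exact hQ0
        · simp only [mul_zero, zero_mul]
          exact hQ0
  · rcases hb with rfl | rfl | rfl
    · rcases hc with rfl | rfl | rfl
      · rcases hd with rfl | rfl | rfl
        · have hnn : (0:ℤ) ≤ 2 ^ c₁ * (2 ^ m - 2 ^ c₂) * (2 ^ m - 2 ^ c₃) * (2 ^ m - 2 ^ c₄) :=
            mul_nonneg (mul_nonneg (mul_nonneg (by positivity : (0:ℤ) ≤ 2 ^ c₁) hA2.le) hA3.le) hA4.le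
          linarith [hQ0, hnn]
        · calc (-2 ^ c₁) * (2 ^ m - 2 ^ c₂) * (2 ^ m - 2 ^ c₃) * (-2 ^ c₄) = (2 ^ c₁ * 2 ^ c₄) * ((2 ^ m - 2 ^ c₂) * (2 ^ m - 2 ^ c₃)) := by ring
            _ ≤ (2 ^ s₃ * 2 ^ s₄) * ((2 ^ m - 2 ^ s₁) * (2 ^ m - 2 ^ s₂)) :=
              mul_le_mul hP14 hB23 (mul_nonneg hA2.le hA3.le) (by positivity)
            _ = 2 ^ s₃ * 2 ^ s₄ * (2 ^ m - 2 ^ s₁) * (2 ^ m - 2 ^ s₂) := by ring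
        · simp only [mul_zero, zero_mul]
          exact hQ0
      · rcases hd with rfl | rfl | rfl
        · calc (-2 ^ c₁) * (2 ^ m - 2 ^ c₂) * (-2 ^ c₃) * (2 ^ m - 2 ^ c₄) = (2 ^ c₁ * 2 ^ c₃) * ((2 ^ m - 2 ^ c₂) * (2 ^ m - 2 ^ c₄)) := by ring
            _ ≤ (2 ^ s₃ * 2 ^ s₄) * ((2 ^ m - 2 ^ s₁) * (2 ^ m - 2 ^ s₂)) :=
              mul_le_mul hP13 hB24 (mul_nonneg hA2.le hA4.le) (by positivity)
            _ = 2 ^ s₃ * 2 ^ s₄ * (2 ^ m - 2 ^ s₁) * (2 ^ m - 2 ^ s₂) := by ring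
        · have hnn : (0:ℤ) ≤ 2 ^ c₁ * (2 ^ m - 2 ^ c₂) * 2 ^ c₃ * 2 ^ c₄ :=
            mul_nonneg (mul_nonneg (mul_nonneg (by positivity : (0:ℤ) ≤ 2 ^ c₁) hA2.le) (by positivity : (0:ℤ) ≤ 2 ^ c₃)) (by positivity : (0:ℤ) ≤ 2 ^ c₄)
          linarith [hQ0, hnn]
        · simp only [mul_zero, zero_mul]
          exact hQ0
      · rcases hd with rfl | rfl | rfl
        · simp only [mul_zero, zero_mul]
          exact hQ0
        · simp only [mul_zero, zero_mul]
          exact hQ0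
        · simp only [mul_zero, zero_mul]
          exact hQ0
    · rcases hc with rfl | rfl | rfl
      · rcases hd with rfl | rfl | rfl
        · calc (-2 ^ c₁) * (-2 ^ c₂) * (2 ^ m - 2 ^ c₃) * (2 ^ m - 2 ^ c₄) = (2 ^ c₁ * 2 ^ c₂) * ((2 ^ m - 2 ^ c₃) * (2 ^ m - 2 ^ c₄)) := by ring
            _ ≤ (2 ^ s₃ * 2 ^ s₄) * ((2 ^ m - 2 ^ s₁) * (2 ^ m - 2 ^ s₂)) :=
              mul_le_mul hP12 hB34 (mul_nonneg hA3.le hA4.le) (by positivity)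
            _ = 2 ^ s₃ * 2 ^ s₄ * (2 ^ m - 2 ^ s₁) * (2 ^ m - 2 ^ s₂) := by ring
        · have hnn : (0:ℤ) ≤ 2 ^ c₁ * 2 ^ c₂ * (2 ^ m - 2 ^ c₃) * 2 ^ c₄ :=
            mul_nonneg (mul_nonneg (mul_nonneg (by positivity : (0:ℤ) ≤ 2 ^ c₁) (by positivity : (0:ℤ) ≤ 2 ^ c₂)) hA3.le) (by positivity : (0:ℤ) ≤ 2 ^ c₄)
          linarith [hQ0, hnn]
        · simp only [mul_zero, zero_mul]
          exact hQ0
      · rcases hd with rfl | rfl | rfl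
        · have hnn : (0:ℤ) ≤ 2 ^ c₁ * 2 ^ c₂ * 2 ^ c₃ * (2 ^ m - 2 ^ c₄) :=
            mul_nonneg (mul_nonneg (mul_nonneg (by positivity : (0:ℤ) ≤ 2 ^ c₁) (by positivity : (0:ℤ) ≤ 2 ^ c₂)) (by positivity : (0:ℤ) ≤ 2 ^ c₃)) hA4.le
          linarith [hQ0, hnn]
        · calc (-2 ^ c₁) * (-2 ^ c₂) * (-2 ^ c₃) * (-2 ^ c₄) = 2 ^ c₁ * 2 ^ c₂ * 2 ^ c₃ * 2 ^ c₄ := by ring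
            _ ≤ 2 ^ s₃ * 2 ^ s₄ * (2 ^ m - 2 ^ s₁) * (2 ^ m - 2 ^ s₂) := hall
        · simp only [mul_zero, zero_mul]
          exact hQ0
      · rcases hd with rfl | rfl | rfl
        · simp only [mul_zero, zero_mul]
          exact hQ0
        · simp only [mul_zero, zero_mul]
          exact hQ0
        · simp only [mul_zero, zero_mul]
          exact hQ0
    · rcases hc with rfl | rfl | rfl
      · rcases hd with rfl | rfl | rfl
        · simp only [mul_zero, zero_mul]
          exact hQ0
        · simp only [mul_zero, zero_mul]
          exact hQ0
        · simp only [mul_zero, zero_mul]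
          exact hQ0
      · rcases hd with rfl | rfl | rfl
        · simp only [mul_zero, zero_mul]
          exact hQ0
        · simp only [mul_zero, zero_mul]
          exact hQ0
        · simp only [mul_zero, zero_mul]
          exact hQ0
      · rcases hd with rfl | rfl | rfl
        · simp only [mul_zero, zero_mul]
          exact hQ0
        · simp only [mul_zero, zero_mul]
          exact hQ0
        · simp only [mul_zero, zero_mul]
          exact hQ0
  · rcases hb with rfl | rfl | rfl
    · rcases hc with rfl | rfl | rfl
      · rcases hd with rfl | rfl | rfl
        · simp only [mul_zero, zero_mul]
          exact hQ0
        · simp only [mul_zero, zero_mul]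
          exact hQ0
        · simp only [mul_zero, zero_mul]
          exact hQ0
      · rcases hd with rfl | rfl | rfl
        · simp only [mul_zero, zero_mul]
          exact hQ0
        · simp only [mul_zero, zero_mul]
          exact hQ0
        · simp only [mul_zero, zero_mul]
          exact hQ0
      · rcases hd with rfl | rfl | rfl
        · simp only [mul_zero, zero_mul]
          exact hQ0
        · simp only [mul_zero, zero_mul]
          exact hQ0
        · simp only [mul_zero, zero_mul]
          exact hQ0
    · rcases hc with rfl | rfl | rfl
      · rcases hd with rfl | rfl | rfl
        · simp only [mul_zero, zero_mul]
          exact hQ0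
        · simp only [mul_zero, zero_mul]
          exact hQ0
        · simp only [mul_zero, zero_mul]
          exact hQ0
      · rcases hd with rfl | rfl | rfl
        · simp only [mul_zero, zero_mul]
          exact hQ0
        · simp only [mul_zero, zero_mul]
          exact hQ0
        · simp only [mul_zero, zero_mul]
          exact hQ0
      · rcases hd with rfl | rfl | rfl
        · simp only [mul_zero, zero_mul]
          exact hQ0
        · simp only [mul_zero, zero_mul]
          exact hQ0
        · simp only [mul_zero, zero_mul]
          exact hQ0
    · rcases hc with rfl | rfl | rfl
      · rcases hd with rfl | rfl | rfl
        · simp only [mul_zero, zero_mul]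
          exact hQ0
        · simp only [mul_zero, zero_mul]
          exact hQ0
        · simp only [mul_zero, zero_mul]
          exact hQ0
      · rcases hd with rfl | rfl | rfl
        · simp only [mul_zero, zero_mul]
          exact hQ0
        · simp only [mul_zero, zero_mul]
          exact hQ0
        · simp only [mul_zero, zero_mul]
          exact hQ0
      · rcases hd with rfl | rfl | rfl
        · simp only [mul_zero, zero_mul]
          exact hQ0
        · simp only [mul_zero, zero_mul]
          exact hQ0
        · simp only [mul_zero, zero_mul]
          exact hQ0

lemma prod4 (f : ℕ → ℤ) (a b c d : ℕ) (hab : a ≠ b) (hac : a ≠ c) (had : a ≠ d)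
    (hbc : b ≠ c) (hbd : b ≠ d) (hcd : c ≠ d) :
    ∏ x ∈ ({a, b, c, d} : Finset ℕ), f x = f a * f b * f c * f d := by
  rw [Finset.prod_insert (by simp [hab, hac, had]),
    Finset.prod_insert (by simp [hbc, hbd]),
    Finset.prod_insert (by simp [hcd]), Finset.prod_singleton]
  ring

lemma sum4 (a b c d : ℕ) (hab : a ≠ b) (hac : a ≠ c) (had : a ≠ d)
    (hbc : b ≠ c) (hbd : b ≠ d) (hcd : c ≠ d) :
    ∑ x ∈ ({a, b, c, d} : Finset ℕ), x = a + b + c + d := by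
  rw [Finset.sum_insert (by simp [hab, hac, had]),
    Finset.sum_insert (by simp [hbc, hbd]),
    Finset.sum_insert (by simp [hcd]), Finset.sum_singleton]
  ring

lemma exists_v (S : Finset (Fin m)) (hS : S.card < m) :
    ∃ v : Fin m → ZMod 2, v ≠ 0 ∧ ∀ i ∈ S, v i = 0 := by
  have hne : ∃ j, j ∉ S := by
    by_contra h
    push_neg at h
    have : S = Finset.univ := Finset.eq_univ_iff_forall.2 h
    rw [this, Finset.card_univ, Fintype.card_fin] at hS
    omega
  obtain ⟨j, hj⟩ := hne
  refine ⟨Pi.single j 1, ?_, ?_⟩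
  · intro h
    have := congrFun h j
    simp [Pi.single_eq_same] at this
  · intro i hi
    exact Pi.single_eq_of_ne (fun e => hj (by rwa [e] at hi)) 1

lemma chi_zero' (S : Finset (Fin m)) :
    ∑ a ∈ deltac S, eps (dotp 0 a) = 2 ^ m - 2 ^ S.card := by
  rw [sum_eps_deltac, if_pos rfl, if_pos (by intro i _; rfl)]

lemma chi_mem3 (S : Finset (Fin m)) (u : Fin m → ZMod 2) :
    (∑ a ∈ deltac S, eps (dotp u a)) = 2 ^ m - 2 ^ S.card ∨
      (∑ a ∈ deltac S, eps (dotp u a)) = -2 ^ S.card ∨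
      (∑ a ∈ deltac S, eps (dotp u a)) = 0 := by
  rw [sum_eps_deltac]
  by_cases hu : u = 0
  · subst hu
    rw [if_pos rfl, if_pos (by intro i _; rfl)]
    left; rfl
  · rw [if_neg hu]
    by_cases h : ∀ i ∈ S, u i = 0
    · rw [if_pos h]; right; left; ring
    · rw [if_neg h]; right; right; ring

lemma chi_ne_full (S : Finset (Fin m)) (hS : S.card < m) (u : Fin m → ZMod 2)
    (hu : u ≠ 0) :
    (∑ a ∈ deltac S, eps (dotp u a)) ≠ 2 ^ m - 2 ^ S.card := by
  have hlt : (2:ℤ) ^ S.card < 2 ^ m := pow_lt_pow_right₀ one_lt_two hS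
  have hp : (0:ℤ) < 2 ^ S.card := by positivity
  rw [sum_eps_deltac, if_neg hu]
  by_cases h : ∀ i ∈ S, u i = 0
  · rw [if_pos h]; intro e; linarith [e]
  · rw [if_neg h]; intro e; linarith [e]

lemma chi_of (S : Finset (Fin m)) (v : Fin m → ZMod 2) (hv0 : v ≠ 0)
    (hv : ∀ i ∈ S, v i = 0) (P : Prop) [Decidable P] :
    ∑ a ∈ deltac S, eps (dotp (if P then v else 0) a) =
      if P then -2 ^ S.card else 2 ^ m - 2 ^ S.card := by
  split_ifs with h
  · rw [sum_eps_deltac, if_neg hv0, if_pos hv]; ring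
  · exact chi_zero' S

end S9

set_option maxHeartbeats 1000000 in
open S9 in
theorem stmt9 (m : ℕ) (hm : 0 < m) (X Y Z W : Finset (Fin m))
    (hXY : X.card ≠ Y.card) (hXZ : X.card ≠ Z.card) (hXW : X.card ≠ W.card)
    (hYZ : Y.card ≠ Z.card) (hYW : Y.card ≠ W.card) (hZW : Z.card ≠ W.card)
    (hXm : X.card < m) (hYm : Y.card < m) (hZm : Z.card < m) (hWm : W.card < m)
    (s₁ s₂ s₃ s₄ : ℕ) (h12 : s₁ < s₂) (h23 : s₂ < s₃) (h34 : s₃ < s₄)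
    (hsort : ({s₁, s₂, s₃, s₄} : Finset ℕ) = {X.card, Y.card, Z.card, W.card}) :
    (∀ t : Msg m,
      cw (deltac X) (deltac Y) (deltac Z) (deltac W) t = 0 ↔ t = 0) ∧
    (∀ t : Msg m, t ≠ 0 →
      (2 ^ m - 2 ^ s₁) * (2 ^ m - 2 ^ s₂) * (2 ^ m - 2 ^ s₃ - 2 ^ s₄) * 2 ^ m ≤
        2 * cw (deltac X) (deltac Y) (deltac Z) (deltac W) t) ∧
    (∃ t : Msg m,
      2 * cw (deltac X) (deltac Y) (deltac Z) (deltac W) t =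
        (2 ^ m - 2 ^ s₁) * (2 ^ m - 2 ^ s₂) * (2 ^ m - 2 ^ s₃ - 2 ^ s₄) * 2 ^ m) := by
  classical
  -- memberships of the cardinalities in {s₁,s₂,s₃,s₄}
  have hmX : X.card = s₁ ∨ X.card = s₂ ∨ X.card = s₃ ∨ X.card = s₄ := by
    have h : X.card ∈ ({s₁, s₂, s₃, s₄} : Finset ℕ) := by rw [hsort]; simp
    simpa using h
  have hmY : Y.card = s₁ ∨ Y.card = s₂ ∨ Y.card = s₃ ∨ Y.card = s₄ := by
    have h : Y.card ∈ ({s₁, s₂, s₃, s₄} : Finset ℕ) := by rw [hsort]; simp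
    simpa using h
  have hmZ : Z.card = s₁ ∨ Z.card = s₂ ∨ Z.card = s₃ ∨ Z.card = s₄ := by
    have h : Z.card ∈ ({s₁, s₂, s₃, s₄} : Finset ℕ) := by rw [hsort]; simp
    simpa using h
  have hmW : W.card = s₁ ∨ W.card = s₂ ∨ W.card = s₃ ∨ W.card = s₄ := by
    have h : W.card ∈ ({s₁, s₂, s₃, s₄} : Finset ℕ) := by rw [hsort]; simp
    simpa using h
  have hs4m : s₄ < m := by
    have h : s₄ ∈ ({X.card, Y.card, Z.card, W.card} : Finset ℕ) := by rw [← hsort]; simp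
    simp only [Finset.mem_insert, Finset.mem_singleton] at h
    rcases h with h | h | h | h <;> omega
  have hsum : X.card + Y.card + Z.card + W.card = s₁ + s₂ + s₃ + s₄ := by
    have e1 := S9.sum4 s₁ s₂ s₃ s₄ (by omega) (by omega) (by omega) (by omega) (by omega)
      (by omega)
    have e2 := S9.sum4 X.card Y.card Z.card W.card hXY hXZ hXW hYZ hYW hZW
    rw [hsort] at e1
    omega
  have hN : ((2:ℤ) ^ m - 2 ^ X.card) * (2 ^ m - 2 ^ Y.card) * (2 ^ m - 2 ^ Z.card) *
      (2 ^ m - 2 ^ W.card) =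
      ((2:ℤ) ^ m - 2 ^ s₁) * (2 ^ m - 2 ^ s₂) * (2 ^ m - 2 ^ s₃) * (2 ^ m - 2 ^ s₄) := by
    have e1 := S9.prod4 (fun x => (2:ℤ) ^ m - 2 ^ x) X.card Y.card Z.card W.card hXY hXZ hXW
      hYZ hYW hZW
    have e2 := S9.prod4 (fun x => (2:ℤ) ^ m - 2 ^ x) s₁ s₂ s₃ s₄ (by omega) (by omega)
      (by omega) (by omega) (by omega) (by omega)
    rw [← e1, ← e2, hsort]
  -- natural-number inequalities for casting
  have n1 : (2:ℕ) ^ s₁ ≤ 2 ^ m := Nat.pow_le_pow_right (by omega) (by omega)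
  have n2 : (2:ℕ) ^ s₂ ≤ 2 ^ m := Nat.pow_le_pow_right (by omega) (by omega)
  have n3 : (2:ℕ) ^ s₃ ≤ 2 ^ m := Nat.pow_le_pow_right (by omega) (by omega)
  have n34 : (2:ℕ) ^ s₃ + 2 ^ s₄ < 2 ^ m := by
    have a1 : (2:ℕ) ^ s₃ < 2 ^ s₄ := Nat.pow_lt_pow_right (by omega) (by omega)
    have a2 : (2:ℕ) ^ (s₄ + 1) ≤ 2 ^ m := Nat.pow_le_pow_right (by omega) (by omega)
    rw [pow_succ] at a2
    omega
  have hMcast : (((2 ^ m - 2 ^ s₁) * (2 ^ m - 2 ^ s₂) * (2 ^ m - 2 ^ s₃ - 2 ^ s₄) * 2 ^ m : ℕ) : ℤ)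
      = ((2:ℤ) ^ m - 2 ^ s₁) * (2 ^ m - 2 ^ s₂) * (2 ^ m - 2 ^ s₃ - 2 ^ s₄) * 2 ^ m := by
    rw [Nat.cast_mul, Nat.cast_mul, Nat.cast_mul, Nat.cast_sub n1, Nat.cast_sub n2,
      Nat.cast_sub (show (2:ℕ) ^ s₄ ≤ 2 ^ m - 2 ^ s₃ by omega), Nat.cast_sub n3]
    push_cast
    ring
  -- part 2
  have main2 : ∀ t : Msg m, t ≠ 0 →
      (2 ^ m - 2 ^ s₁) * (2 ^ m - 2 ^ s₂) * (2 ^ m - 2 ^ s₃ - 2 ^ s₄) * 2 ^ m ≤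
        2 * cw (deltac X) (deltac Y) (deltac Z) (deltac W) t := by
    intro t ht
    have hformula := S9.cw_formula (deltac X) (deltac Y) (deltac Z) (deltac W) t
    rw [S9.card_deltac, S9.card_deltac, S9.card_deltac, S9.card_deltac] at hformula
    have hune : (t.1 + t.2.2.2) ≠ 0 ∨ t.2.2.1 ≠ 0 ∨ t.2.1 ≠ 0 ∨ t.1 ≠ 0 := by
      by_contra h
      push_neg at h
      obtain ⟨h1, h2, h3, h4⟩ := h
      apply ht
      have h5 : t.2.2.2 = 0 := by rwa [h4, zero_add] at h1
      obtain ⟨a, b, c, d⟩ := t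
      exact Prod.ext h4 (Prod.ext h3 (Prod.ext h2 h5))
    have hne' : (∑ a ∈ deltac X, eps (dotp (t.1 + t.2.2.2) a)) ≠ 2 ^ m - 2 ^ X.card ∨
        (∑ b ∈ deltac Y, eps (dotp t.2.2.1 b)) ≠ 2 ^ m - 2 ^ Y.card ∨
        (∑ c ∈ deltac Z, eps (dotp t.2.1 c)) ≠ 2 ^ m - 2 ^ Z.card ∨
        (∑ e ∈ deltac W, eps (dotp t.1 e)) ≠ 2 ^ m - 2 ^ W.card := by
      rcases hune with h | h | h | h
      · exact Or.inl (S9.chi_ne_full X hXm _ h)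
      · exact Or.inr (Or.inl (S9.chi_ne_full Y hYm _ h))
      · exact Or.inr (Or.inr (Or.inl (S9.chi_ne_full Z hZm _ h)))
      · exact Or.inr (Or.inr (Or.inr (S9.chi_ne_full W hWm _ h)))
    have hkey := S9.keyA m s₁ s₂ s₃ s₄ X.card Y.card Z.card W.card h12 h23 h34 hs4m
      hmX hmY hmZ hmW hXY hXZ hXW hYZ hYW hZW hsum
      (∑ a ∈ deltac X, eps (dotp (t.1 + t.2.2.2) a))
      (∑ b ∈ deltac Y, eps (dotp t.2.2.1 b))
      (∑ c ∈ deltac Z, eps (dotp t.2.1 c))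
      (∑ e ∈ deltac W, eps (dotp t.1 e))
      (S9.chi_mem3 X _) (S9.chi_mem3 Y _) (S9.chi_mem3 Z _) (S9.chi_mem3 W _) hne'
    have hZle : (((2 ^ m - 2 ^ s₁) * (2 ^ m - 2 ^ s₂) * (2 ^ m - 2 ^ s₃ - 2 ^ s₄) * 2 ^ m : ℕ) : ℤ)
        ≤ ((2 * cw (deltac X) (deltac Y) (deltac Z) (deltac W) t : ℕ) : ℤ) := by
      rw [hMcast]
      push_cast
      nlinarith [hformula, hkey, hN]
    exact_mod_cast hZle
  refine ⟨?_, main2, ?_⟩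
  · -- part 1
    intro t
    constructor
    · intro h0
      by_contra htne
      have hb := main2 t htne
      have l1 : (2:ℕ) ^ s₁ < 2 ^ m := Nat.pow_lt_pow_right (by omega) (by omega)
      have l2 : (2:ℕ) ^ s₂ < 2 ^ m := Nat.pow_lt_pow_right (by omega) (by omega)
      have hMpos : 0 < (2 ^ m - 2 ^ s₁) * (2 ^ m - 2 ^ s₂) * (2 ^ m - 2 ^ s₃ - 2 ^ s₄) * 2 ^ m :=
        Nat.mul_pos (Nat.mul_pos (Nat.mul_pos (by omega) (by omega)) (by omega))
          (Nat.pow_pos (by omega))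
      omega
    · intro h
      subst h
      have hz : ∀ p : Msg m, cword (0 : Msg m) p = 0 := by
        intro p
        simp only [cword, Prod.fst_zero, Prod.snd_zero, add_zero, S9.dotp_zero, zero_add]
      rw [cw]
      rw [Finset.card_eq_zero, Finset.filter_eq_empty_iff]
      intro p _
      simp [hz p]
  · -- part 3 : existence
    obtain ⟨vX, hvX0, hvX⟩ := S9.exists_v X hXm
    obtain ⟨vY, hvY0, hvY⟩ := S9.exists_v Y hYm
    obtain ⟨vZ, hvZ0, hvZ⟩ := S9.exists_v Z hZm
    obtain ⟨vW, hvW0, hvW⟩ := S9.exists_v W hWm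
    set uX : Fin m → ZMod 2 := if s₃ ≤ X.card then vX else 0 with huX
    set uY : Fin m → ZMod 2 := if s₃ ≤ Y.card then vY else 0 with huY
    set uZ : Fin m → ZMod 2 := if s₃ ≤ Z.card then vZ else 0 with huZ
    set uW : Fin m → ZMod 2 := if s₃ ≤ W.card then vW else 0 with huW
    refine ⟨(uW, uZ, uY, uX + uW), ?_⟩
    have hformula := S9.cw_formula (deltac X) (deltac Y) (deltac Z) (deltac W)
      (uW, uZ, uY, uX + uW)
    rw [S9.card_deltac, S9.card_deltac, S9.card_deltac, S9.card_deltac] at hformula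
    dsimp only at hformula
    have hu1 : uW + (uX + uW) = uX := by
      have hself : uW + uW = 0 := by
        funext i
        exact CharTwo.add_self_eq_zero (uW i)
      rw [add_comm uX uW, ← add_assoc, hself, zero_add]
    rw [hu1] at hformula
    have e1 : (∑ a ∈ deltac X, eps (dotp uX a)) =
        (fun x : ℕ => if s₃ ≤ x then -(2:ℤ) ^ x else 2 ^ m - 2 ^ x) X.card :=
      S9.chi_of X vX hvX0 hvX (s₃ ≤ X.card)
    have e2 : (∑ a ∈ deltac Y, eps (dotp uY a)) =
        (fun x : ℕ => if s₃ ≤ x then -(2:ℤ) ^ x else 2 ^ m - 2 ^ x) Y.card :=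
      S9.chi_of Y vY hvY0 hvY (s₃ ≤ Y.card)
    have e3 : (∑ a ∈ deltac Z, eps (dotp uZ a)) =
        (fun x : ℕ => if s₃ ≤ x then -(2:ℤ) ^ x else 2 ^ m - 2 ^ x) Z.card :=
      S9.chi_of Z vZ hvZ0 hvZ (s₃ ≤ Z.card)
    have e4 : (∑ a ∈ deltac W, eps (dotp uW a)) =
        (fun x : ℕ => if s₃ ≤ x then -(2:ℤ) ^ x else 2 ^ m - 2 ^ x) W.card :=
      S9.chi_of W vW hvW0 hvW (s₃ ≤ W.card)
    rw [e1, e2, e3, e4] at hformula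
    have hgP : (fun x : ℕ => if s₃ ≤ x then -(2:ℤ) ^ x else 2 ^ m - 2 ^ x) X.card *
        (fun x : ℕ => if s₃ ≤ x then -(2:ℤ) ^ x else 2 ^ m - 2 ^ x) Y.card *
        (fun x : ℕ => if s₃ ≤ x then -(2:ℤ) ^ x else 2 ^ m - 2 ^ x) Z.card *
        (fun x : ℕ => if s₃ ≤ x then -(2:ℤ) ^ x else 2 ^ m - 2 ^ x) W.card =
        ((2:ℤ) ^ m - 2 ^ s₁) * (2 ^ m - 2 ^ s₂) * (2 ^ s₃ * 2 ^ s₄) := by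
      rw [← S9.prod4 (fun x : ℕ => if s₃ ≤ x then -(2:ℤ) ^ x else 2 ^ m - 2 ^ x)
        X.card Y.card Z.card W.card hXY hXZ hXW hYZ hYW hZW, ← hsort,
        S9.prod4 (fun x : ℕ => if s₃ ≤ x then -(2:ℤ) ^ x else 2 ^ m - 2 ^ x)
        s₁ s₂ s₃ s₄ (by omega) (by omega) (by omega) (by omega) (by omega) (by omega)]
      rw [if_neg (by omega), if_neg (by omega), if_pos (by omega), if_pos (by omega)]
      ring
    have hZeq : ((2 * cw (deltac X) (deltac Y) (deltac Z) (deltac W)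
        (uW, uZ, uY, uX + uW) : ℕ) : ℤ)
        = (((2 ^ m - 2 ^ s₁) * (2 ^ m - 2 ^ s₂) * (2 ^ m - 2 ^ s₃ - 2 ^ s₄) * 2 ^ m : ℕ) : ℤ) := by
      rw [hMcast]
      push_cast
      nlinarith [hformula, hgP, hN]
    exact_mod_cast hZeq
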